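/- arXiv:2002.12329 — 4 statements merged into one kernel-verified Lean document; each statement's English description precedes it below -/
import Mathlib

section
/- Let A be a Banach DGLA over ℝ, let e ∈ A_0, and let x : ℝ → A_{−1} be a differentiable curve satisfying x'(t) = ∂e − [e, x(t)] for all t ∈ ℝ. Then the curvature curve f(t) := ∂x(t) + (1/2)[x(t), x(t)] ∈ A_{−2} is differentiable and satisfies the linear equation f'(t) = −[e, f(t)] for all t ∈ ℝ. -/
/-- A Banach DGLA over `ℝ`: a differential graded Lie algebra whose underlying space is a
Banach space, each graded piece `Aₙ` a closed subspace, with a continuous bilinear bracket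
respecting the grading (with graded antisymmetry and graded Jacobi identity) and a bounded
differential `∂` of degree `-1` with `∂ ∘ ∂ = 0` satisfying the graded Leibniz rule. -/
class BanachDGLA (A : Type*) [NormedAddCommGroup A] [NormedSpace ℝ A] [CompleteSpace A] where
  bracket : A →L[ℝ] A →L[ℝ] A
  grading : ℤ → Submodule ℝ A
  closed_grading : ∀ n, IsClosed (grading n : Set A)
  isInternal : DirectSum.IsInternal grading
  bracket_mem : ∀ (m n : ℤ) (a b : A), a ∈ grading m → b ∈ grading n →
    bracket a b ∈ grading (m + n)
  bracket_antisymm : ∀ (m n : ℤ) (a b : A), a ∈ grading m → b ∈ grading n →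
    bracket b a = -(((-1 : ℝ) ^ (m * n)) • bracket a b)
  jacobi : ∀ (l m n : ℤ) (a b c : A), a ∈ grading l → b ∈ grading m → c ∈ grading n →
    ((-1 : ℝ) ^ (l * m)) • bracket (bracket b c) a
      + ((-1 : ℝ) ^ (m * n)) • bracket (bracket c a) b
      + ((-1 : ℝ) ^ (n * l)) • bracket (bracket a b) c = 0
  d : A →L[ℝ] A
  d_mem : ∀ (n : ℤ) (a : A), a ∈ grading n → d a ∈ grading (n - 1)
  d_sq : ∀ a : A, d (d a) = 0
  leibniz : ∀ (m : ℤ) (a b : A), a ∈ grading m →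
    d (bracket a b) = bracket (d a) b + ((-1 : ℝ) ^ m) • bracket a (d b)

namespace BanachDGLA

variable {A : Type*} [NormedAddCommGroup A] [NormedSpace ℝ A] [CompleteSpace A] [BanachDGLA A]

/-- The differential `∂` of the Banach DGLA. -/
noncomputable def D : A →L[ℝ] A := BanachDGLA.d

/-- The bracket `[x, y]` of the Banach DGLA. -/
noncomputable def br (x y : A) : A := BanachDGLA.bracket x y

/-- The `n`-th graded piece `Aₙ`. -/
noncomputable def gr (n : ℤ) : Submodule ℝ A := BanachDGLA.grading n

/-- The adjoint operator `ad_x = [x, ·]`, a bounded operator. -/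
noncomputable def ad (x : A) : A →L[ℝ] A := BanachDGLA.bracket x

/-- The curvature `κ(a) = ∂a + (1/2)[a,a]`. -/
noncomputable def curv (a : A) : A := D a + (2⁻¹ : ℝ) • br a a

end BanachDGLA

section Aux
open BanachDGLA
variable {A : Type*} [NormedAddCommGroup A] [NormedSpace ℝ A] [CompleteSpace A] [BanachDGLA A]

lemma my_br_symm {a b : A} (ha : a ∈ gr (-1)) (hb : b ∈ gr (-1)) :
    br b a = br a b := by
  have h := BanachDGLA.bracket_antisymm (-1) (-1) a b ha hb
  norm_num at h
  simpa [br] using h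

lemma my_br_e_skew {e a : A} (he : e ∈ gr 0) (hn : ∃ n, a ∈ gr n) :
    br a e = -br e a := by
  obtain ⟨n, ha⟩ := hn
  have h := BanachDGLA.bracket_antisymm 0 n e a he ha
  norm_num at h
  simpa [br] using h

lemma my_key {e a : A} (he : e ∈ gr 0) (ha : a ∈ gr (-1)) :
    br a (br e a) = (2⁻¹ : ℝ) • br e (br a a) := by
  have hea : br e a ∈ gr (-1) := by
    have := BanachDGLA.bracket_mem 0 (-1) e a he ha
    simpa [br, gr] using this
  have haa : br a a ∈ gr (-2) := by
    have := BanachDGLA.bracket_mem (-1) (-1) a a ha ha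
    simpa [br, gr] using this
  have hj := BanachDGLA.jacobi 0 (-1) (-1) e a a he ha ha
  norm_num at hj
  -- hj : bracket (bracket a a) e - bracket (bracket a e) a + bracket (bracket e a) a = 0
  have hae : BanachDGLA.bracket a e = -(BanachDGLA.bracket e a) := by
    simpa [br] using my_br_e_skew he ⟨-1, ha⟩
  have haae : BanachDGLA.bracket (BanachDGLA.bracket a a) e
      = -(BanachDGLA.bracket e (BanachDGLA.bracket a a)) := by
    simpa [br] using my_br_e_skew he ⟨-2, haa⟩
  have hsym : br a (br e a) = br (br e a) a := my_br_symm hea ha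
  simp only [hae, haae, map_neg, ContinuousLinearMap.neg_apply] at hj
  simp only [br] at hsym ⊢
  rw [hsym]
  have h2 : (2:ℝ) • BanachDGLA.bracket (BanachDGLA.bracket e a) a
      = BanachDGLA.bracket e (BanachDGLA.bracket a a) := by
    have := hj
    rw [two_smul]
    linear_combination (norm := abel) this
  calc BanachDGLA.bracket (BanachDGLA.bracket e a) a
      = (2⁻¹:ℝ) • ((2:ℝ) • BanachDGLA.bracket (BanachDGLA.bracket e a) a) := by
        rw [smul_smul]; norm_num
    _ = (2⁻¹:ℝ) • BanachDGLA.bracket e (BanachDGLA.bracket a a) := by rw [h2]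

end Aux

open BanachDGLA in
/-- in a Banach DGLA over `ℝ`, if `e ∈ A₀` and `x : ℝ → A₋₁` is a differentiable
curve satisfying the flow equation `x'(t) = ∂e − [e, x(t)]`, then the curvature curve
`f(t) := ∂x(t) + (1/2)[x(t), x(t)] ∈ A₋₂` is differentiable and satisfies the linear
equation `f'(t) = −[e, f(t)]`. -/
theorem curvature_flow_ode {A : Type*} [NormedAddCommGroup A] [NormedSpace ℝ A]
    [CompleteSpace A] [BanachDGLA A]
    (e : A) (he : e ∈ gr 0) (x : ℝ → A) (hx : ∀ t, x t ∈ gr (-1))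
    (hflow : ∀ t : ℝ, HasDerivAt x (D e - br e (x t)) t) :
    ∀ t : ℝ, HasDerivAt (fun s => curv (x s)) (-br e (curv (x t))) t := by
  intro t
  set a := x t with ha_def
  set v := D e - br e a with hv
  have ha : a ∈ gr (-1) := hx t
  have hDe : D e ∈ gr (-1) := by
    have := BanachDGLA.d_mem 0 e he
    simpa [D, gr] using this
  have hea : br e a ∈ gr (-1) := by
    have := BanachDGLA.bracket_mem 0 (-1) e a he ha
    simpa [br, gr] using this
  have hvmem : v ∈ gr (-1) := Submodule.sub_mem _ hDe hea
  -- derivative of D ∘ x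
  have h1 : HasDerivAt (fun s => D (x s)) (D v) t :=
    (D : A →L[ℝ] A).hasFDerivAt.comp_hasDerivAt t (hflow t)
  -- derivative of bracket (x s) (x s)
  have hB : IsBoundedBilinearMap ℝ fun p : A × A => BanachDGLA.bracket p.1 p.2 :=
    (BanachDGLA.bracket (A := A)).isBoundedBilinearMap
  have hxx : HasDerivAt (fun s => (x s, x s)) (v, v) t := (hflow t).prodMk (hflow t)
  have h2 : HasDerivAt (fun s => br (x s) (x s)) (br v a + br a v) t := by
    have := (hB.hasFDerivAt (a, a)).comp_hasDerivAt t hxx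
    simpa [br, IsBoundedBilinearMap.deriv_apply, add_comm, Function.comp_def] using this
  have h3 : HasDerivAt (fun s => curv (x s)) (D v + (2⁻¹:ℝ) • (br v a + br a v)) t := by
    simpa [curv, Pi.add_def, Pi.smul_def] using h1.add (h2.const_smul (2⁻¹:ℝ))
  convert h3 using 1
  -- algebra
  have hsymv : br v a = br a v := (my_br_symm hvmem ha).symm
  have hsymDe : br (D e) a = br a (D e) := (my_br_symm hDe ha).symm
  have hkey : br a (br e a) = (2⁻¹ : ℝ) • br e (br a a) := my_key he ha
  have hleib : D (br e a) = br (D e) a + br e (D a) := by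
    have := BanachDGLA.leibniz 0 e a he
    simpa [D, br] using this
  have hdd : D (D e) = 0 := by simp [D, BanachDGLA.d_sq]
  rw [hsymv, ← two_smul ℝ (br a v), smul_smul]
  norm_num
  rw [hv]
  simp only [map_sub, hleib, hdd, zero_sub]
  have hbr2 : br a (D e - br e a) = br a (D e) - br a (br e a) := by
    simp [br, map_sub]
  rw [hbr2, hkey, ← hsymDe]
  have hce : br e (curv a) = br e (D a) + (2⁻¹:ℝ) • br e (br a a) := by
    simp [curv, br, map_add, map_smul]
  rw [hce]
  abel
end

section
/- Flows preserve flatness (Lemma 2.1): let A be a Banach DGLA over ℝ, let e ∈ A_0, and let x : ℝ → A_{−1} be a differentiable curve satisfying x'(t) = ∂e − [e, x(t)] for all t ∈ ℝ. If x(0) satisfies the Maurer–Cartan equation ∂x(0) + (1/2)[x(0), x(0)] = 0, then x(t) satisfies the Maurer–Cartan equation for every t ∈ ℝ. -/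
open Set in
/-- A curve solving the linear ODE `f' = L f` with `f 0 = 0` vanishes identically. -/
lemma zero_of_hasDerivAt_clm {A : Type*} [NormedAddCommGroup A] [NormedSpace ℝ A]
    (L : A →L[ℝ] A) (f : ℝ → A) (hf : ∀ t, HasDerivAt f (L (f t)) t) (h0 : f 0 = 0) :
    ∀ t, f t = 0 := by
  intro t
  have key := ODE_solution_unique_of_mem_Ioo
    (v := fun _ => L) (s := fun _ => (univ : Set A)) (K := ‖L‖₊)
    (fun _ _ => L.lipschitz.lipschitzOnWith)
    (t₀ := 0) (a := -(|t| + 1)) (b := |t| + 1) (f := f) (g := fun _ => (0 : A))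
    (by constructor <;> [linarith [abs_nonneg t]; linarith [abs_nonneg t]])
    (fun s _ => ⟨hf s, mem_univ _⟩)
    (fun s _ => ⟨by simpa using hasDerivAt_const s (0 : A), mem_univ _⟩)
    h0
  exact key ⟨by linarith [neg_abs_le t], by linarith [le_abs_self t]⟩

open BanachDGLA in
/-- flows preserve flatness (Lemma 2.1). In a Banach DGLA over `ℝ`, if `e ∈ A₀`
and `x : ℝ → A₋₁` is a differentiable curve satisfying the flow equation
`x'(t) = ∂e − [e, x(t)]`, and `x(0)` satisfies the Maurer–Cartan equation
`∂x(0) + (1/2)[x(0), x(0)] = 0`, then `x(t)` satisfies the Maurer–Cartan equation for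
every `t ∈ ℝ`. -/
theorem flow_preserves_flatness {A : Type*} [NormedAddCommGroup A] [NormedSpace ℝ A]
    [CompleteSpace A] [BanachDGLA A]
    (e : A) (he : e ∈ gr 0) (x : ℝ → A) (hx : ∀ t, x t ∈ gr (-1))
    (hflow : ∀ t : ℝ, HasDerivAt x (D e - br e (x t)) t)
    (h0 : D (x 0) + (2⁻¹ : ℝ) • br (x 0) (x 0) = 0) :
    ∀ t : ℝ, D (x t) + (2⁻¹ : ℝ) • br (x t) (x t) = 0 := by
  classical
  set B : A →L[ℝ] A →L[ℝ] A := BanachDGLA.bracket with hB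
  set d : A →L[ℝ] A := BanachDGLA.d with hd
  have hbr : ∀ a b : A, br a b = B a b := fun _ _ => rfl
  have hD : ∀ a : A, D a = d a := fun _ => rfl
  set κ : ℝ → A := fun t => D (x t) + (2⁻¹ : ℝ) • br (x t) (x t) with hκ
  -- membership facts
  have hde : d e ∈ gr (-1) := by
    have := BanachDGLA.d_mem 0 e he; simp at this; exact this
  have hbext : ∀ t, B e (x t) ∈ gr (-1) := fun t => by
    have := BanachDGLA.bracket_mem 0 (-1) e (x t) he (hx t); simp at this; exact this
  have hbxx : ∀ t, B (x t) (x t) ∈ gr (-2) := fun t => by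
    have := BanachDGLA.bracket_mem (-1) (-1) (x t) (x t) (hx t) (hx t); simp at this; exact this
  -- symmetry of bracket on degree -1 elements
  have hsym : ∀ a b : A, a ∈ gr (-1) → b ∈ gr (-1) → B b a = B a b := by
    intro a b ha hb
    have := BanachDGLA.bracket_antisymm (-1) (-1) a b ha hb
    simpa using this
  -- [x, e] = -[e, x]
  have hxe : ∀ t, B (x t) e = -(B e (x t)) := fun t => by
    have := BanachDGLA.bracket_antisymm 0 (-1) e (x t) he (hx t)
    simpa using this
  -- [[x,x], e] = -[e, [x,x]]
  have hxxe : ∀ t, B (B (x t) (x t)) e = -(B e (B (x t) (x t))) := fun t => by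
    have := BanachDGLA.bracket_antisymm 0 (-2) e (B (x t) (x t)) he (hbxx t)
    simpa using this
  -- Jacobi consequence: [e, [x,x]] = 2 • [[e,x],x]
  have hjac : ∀ t, B e (B (x t) (x t)) = (2 : ℝ) • B (B e (x t)) (x t) := by
    intro t
    have j := BanachDGLA.jacobi (-1) 0 (-1) (x t) e (x t) (hx t) he (hx t)
    simp only [neg_mul, mul_neg, neg_neg, mul_zero, zero_mul, zpow_zero, one_smul,
      mul_one, zpow_one, neg_smul] at j
    rw [hxe t, hxxe t] at j
    simp only [map_neg, ContinuousLinearMap.neg_apply] at j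
    have : (2 : ℝ) • B (B e (x t)) (x t) - B e (B (x t) (x t)) = 0 := by
      rw [← j]; module
    linear_combination (norm := module) -this
  -- the curvature solves the linear ODE κ' = -(ad e) κ
  have hκ' : ∀ t, HasDerivAt κ ((-(ad e)) (κ t)) t := by
    intro t
    have h1 : HasDerivAt (fun s => D (x s)) (d (D e - br e (x t))) t :=
      (d.hasFDerivAt (x := x t)).comp_hasDerivAt t (hflow t)
    have hc : HasDerivAt (fun s => B (x s)) (B (D e - br e (x t))) t :=
      (B.hasFDerivAt (x := x t)).comp_hasDerivAt t (hflow t)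
    have h2 : HasDerivAt (fun s => B (x s) (x s))
        (B (D e - br e (x t)) (x t) + B (x t) (D e - br e (x t))) t :=
      hc.clm_apply (hflow t)
    have h3 := h1.add (h2.const_smul (2⁻¹ : ℝ))
    have hform : HasDerivAt κ
        (d (D e - br e (x t)) + (2⁻¹ : ℝ) • (B (D e - br e (x t)) (x t)
          + B (x t) (D e - br e (x t)))) t := h3
    convert hform using 1
    -- algebraic identity
    simp only [hbr, hD, map_sub, map_add, map_smul, ContinuousLinearMap.sub_apply,
      ContinuousLinearMap.neg_apply, ContinuousLinearMap.coe_smul', Pi.smul_apply]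
    have hd2 : d (d e) = 0 := BanachDGLA.d_sq e
    have hleib : d (B e (x t)) = B (d e) (x t) + B e (d (x t)) := by
      have := BanachDGLA.leibniz 0 e (x t) he; simpa using this
    have hs1 : B (x t) (d e) = B (d e) (x t) := hsym _ _ hde (hx t)
    have hs2 : B (x t) (B e (x t)) = B (B e (x t)) (x t) := hsym _ _ (hbext t) (hx t)
    have hL : -((ad e) (κ t)) = -(B e (d (x t))) - B (B e (x t)) (x t) := by
      show -(B e (D (x t) + (2⁻¹ : ℝ) • br (x t) (x t))) = _
      simp only [hbr, hD, map_add, map_smul]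
      rw [hjac t]
      module
    rw [hL, hd2, hleib, hs1, hs2]
    module
  have := zero_of_hasDerivAt_clm (-(ad e)) κ hκ' h0
  exact this
end

section
/- Let A be a Banach DGLA over ℝ, e ∈ A_0 and a ∈ A_{−1}. Define x(t) := exp(−t·ad_e)(a) + Σ_{n≥0} (−1)^n t^{n+1} (ad_e)^n(∂e)/(n+1)! (a convergent series since ad_e is a bounded operator). Then x(0) = a, the curve x is differentiable, and x'(t) = ∂e − [e, x(t)] for all t ∈ ℝ; that is, the explicit formula u_{te}(a) solves the flow equation of e with initial condition a. -/
section Aux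

set_option synthInstance.maxHeartbeats 400000

theorem exp_apply_eq_tsum' {E : Type*} [NormedAddCommGroup E] [NormedSpace ℝ E] [CompleteSpace E]
    (T : E →L[ℝ] E) (t : ℝ) (p : E) :
    Summable (fun n : ℕ => (t ^ n / (Nat.factorial n : ℝ)) • (T ^ n) p) ∧
    NormedSpace.exp (t • T) p = ∑' n : ℕ, (t ^ n / (Nat.factorial n : ℝ)) • (T ^ n) p := by
  have hs := NormedSpace.expSeries_summable' (𝕂 := ℝ) (t • T)
  have hterm : ∀ n : ℕ, (ContinuousLinearMap.apply ℝ E p) (((Nat.factorial n : ℝ)⁻¹) • (t • T) ^ n)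
      = (t ^ n / (Nat.factorial n : ℝ)) • (T ^ n) p := by
    intro n
    simp [smul_pow, smul_smul, div_eq_mul_inv, mul_comm]
  constructor
  · have := (ContinuousLinearMap.apply ℝ E p).summable hs
    exact this.congr hterm
  · rw [NormedSpace.exp_eq_tsum ℝ]
    have := ((ContinuousLinearMap.apply ℝ E p)).map_tsum hs
    simp only [ContinuousLinearMap.apply_apply] at this ⊢
    rw [this]
    exact tsum_congr fun n => by simpa using hterm n

noncomputable def flowOp {A : Type*} [NormedAddCommGroup A] [NormedSpace ℝ A]
    (L : A →L[ℝ] A) (b : A) : (A × ℝ) →L[ℝ] (A × ℝ) :=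
  (((ContinuousLinearMap.snd ℝ A ℝ).smulRight b) - L.comp (ContinuousLinearMap.fst ℝ A ℝ)).prod 0

theorem flowOp_apply {A : Type*} [NormedAddCommGroup A] [NormedSpace ℝ A]
    (L : A →L[ℝ] A) (b : A) (p : A × ℝ) :
    flowOp L b p = (p.2 • b - L p.1, 0) := rfl

theorem flowOp_pow {A : Type*} [NormedAddCommGroup A] [NormedSpace ℝ A]
    (L : A →L[ℝ] A) (b : A) (n : ℕ) (p : A × ℝ) :
    (flowOp L b ^ (n + 1)) p
      = (((-1 : ℝ) ^ (n + 1)) • (L ^ (n + 1)) p.1 + (((-1 : ℝ) ^ n) * p.2) • (L ^ n) b, 0) := by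
  induction n with
  | zero =>
    simp [flowOp_apply, sub_eq_neg_add]
  | succ n ih =>
    have : flowOp L b ^ (n + 1 + 1) = flowOp L b * flowOp L b ^ (n + 1) := (pow_succ' _ _)
    rw [this, ContinuousLinearMap.mul_apply, ih, flowOp_apply]
    have hcom : ∀ y : A, L ((L ^ n) y) = (L ^ n) (L y) := by
      intro y
      rw [← ContinuousLinearMap.mul_apply, ← ContinuousLinearMap.mul_apply, ← pow_succ,
        ← pow_succ']
    simp only [pow_succ]
    simp [map_add, smul_smul, hcom]
    simp only [(Function.Commute.iterate_self (⇑L) n).eq]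
    exact add_comm _ _

end Aux

set_option maxHeartbeats 1000000 in
set_option synthInstance.maxHeartbeats 400000 in
open BanachDGLA in
/-- explicit solution of the flow equation. In a Banach DGLA over `ℝ`, for
`e ∈ A₀` and `a ∈ A₋₁`, the curve
`x(t) := exp(−t·ad_e)(a) + Σ_{n≥0} (−1)ⁿ t^{n+1} (ad_e)ⁿ(∂e)/(n+1)!`
(a convergent series since `ad_e` is a bounded operator) satisfies `x(0) = a`, is
differentiable, and solves `x'(t) = ∂e − [e, x(t)]` for all `t ∈ ℝ`; i.e. the explicit
formula `u_{te}(a)` solves the flow equation of `e` with initial condition `a`. -/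
theorem explicit_flow_solves_ode {A : Type*} [NormedAddCommGroup A] [NormedSpace ℝ A]
    [CompleteSpace A] [BanachDGLA A]
    (e a : A) (he : e ∈ gr 0) (ha : a ∈ gr (-1))
    (x : ℝ → A)
    (hxdef : ∀ t : ℝ, x t =
      (∑' n : ℕ, ((-t) ^ n / (Nat.factorial n : ℝ)) • ((ad e ^ n) a))
      + ∑' n : ℕ, (((-1 : ℝ) ^ n * t ^ (n + 1)) / (Nat.factorial (n + 1) : ℝ)) •
          ((ad e ^ n) (D e))) :
    x 0 = a ∧ ∀ t : ℝ, HasDerivAt x (D e - br e (x t)) t := by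
  classical
  set L := ad e with hL
  set b := D e with hb
  set M := flowOp L b with hM
  have key : ∀ t : ℝ, NormedSpace.exp (t • M) (a, (1 : ℝ)) = (x t, 1) := by
    intro t
    obtain ⟨hu, hexp⟩ := exp_apply_eq_tsum' M t (a, (1 : ℝ))
    obtain ⟨hv, -⟩ := exp_apply_eq_tsum' L (-t) a
    set u : ℕ → A × ℝ := fun n => (t ^ n / (Nat.factorial n : ℝ)) • (M ^ n) (a, (1 : ℝ))
      with hu_def
    set v : ℕ → A := fun n => ((-t) ^ n / (Nat.factorial n : ℝ)) • (L ^ n) a with hv_def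
    set w : ℕ → A := fun n =>
      (((-1 : ℝ) ^ n * t ^ (n + 1)) / (Nat.factorial (n + 1) : ℝ)) • (L ^ n) b with hw_def
    have hufst : ∀ n : ℕ, u (n + 1) = (v (n + 1) + w n, 0) := by
      intro n
      have hpow := flowOp_pow L b n (a, (1 : ℝ))
      simp only [hu_def, hv_def, hw_def, hM, hpow]
      rw [Prod.smul_mk, smul_zero]
      have h1 : (t ^ (n + 1) / (Nat.factorial (n + 1) : ℝ)) •
          (((-1 : ℝ) ^ (n + 1)) • (L ^ (n + 1)) a)
          = ((-t) ^ (n + 1) / (Nat.factorial (n + 1) : ℝ)) • (L ^ (n + 1)) a := by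
        rw [smul_smul]
        congr 1
        rw [neg_pow]
        ring
      have h2 : (t ^ (n + 1) / (Nat.factorial (n + 1) : ℝ)) •
          ((((-1 : ℝ) ^ n) * ((a, (1 : ℝ)).2)) • (L ^ n) b)
          = (((-1 : ℝ) ^ n * t ^ (n + 1)) / (Nat.factorial (n + 1) : ℝ)) • (L ^ n) b := by
        rw [smul_smul]
        congr 1
        simp
        ring
      rw [smul_add, h1, h2]
    have hu1 : Summable (fun n => u (n + 1)) := (summable_nat_add_iff 1).2 hu
    have hv1 : Summable (fun n => v (n + 1)) := (summable_nat_add_iff 1).2 hv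
    have hw : Summable w := by
      have h1 : Summable (fun n => (u (n + 1)).1) :=
        (ContinuousLinearMap.fst ℝ A ℝ).summable hu1
      refine (h1.sub hv1).congr fun n => ?_
      rw [hufst n]
      simp
    have h0 : u 0 = (a, (1 : ℝ)) := by simp [hu_def]
    have hv0 : v 0 = a := by simp [hv_def]
    have hvsum : ∑' n, v (n + 1) = (∑' n, v n) - a := by
      rw [Summable.tsum_eq_zero_add hv, hv0, add_sub_cancel_left]
    have hsplit : ∑' n, u (n + 1) = ((∑' n, v (n + 1)) + ∑' n, w n, (0 : ℝ)) := by
      have hstep : ∀ n : ℕ, u (n + 1)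
          = (ContinuousLinearMap.inl ℝ A ℝ) (v (n + 1))
            + (ContinuousLinearMap.inl ℝ A ℝ) (w n) := by
        intro n
        rw [hufst n]
        simp [Prod.mk_add_mk]
      calc ∑' n, u (n + 1)
          = ∑' n, ((ContinuousLinearMap.inl ℝ A ℝ) (v (n + 1))
              + (ContinuousLinearMap.inl ℝ A ℝ) (w n)) := tsum_congr hstep
        _ = (∑' n, (ContinuousLinearMap.inl ℝ A ℝ) (v (n + 1)))
              + ∑' n, (ContinuousLinearMap.inl ℝ A ℝ) (w n) :=
            Summable.tsum_add ((ContinuousLinearMap.inl ℝ A ℝ).summable hv1)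
              ((ContinuousLinearMap.inl ℝ A ℝ).summable hw)
        _ = (ContinuousLinearMap.inl ℝ A ℝ) (∑' n, v (n + 1))
              + (ContinuousLinearMap.inl ℝ A ℝ) (∑' n, w n) := by
            rw [(ContinuousLinearMap.inl ℝ A ℝ).map_tsum hv1,
              (ContinuousLinearMap.inl ℝ A ℝ).map_tsum hw]
        _ = ((∑' n, v (n + 1)) + ∑' n, w n, (0 : ℝ)) := by
            simp [Prod.mk_add_mk]
    rw [hexp, Summable.tsum_eq_zero_add hu, h0, hsplit, hvsum, hxdef t]
    ext
    · simp only [Prod.mk_add_mk]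
      rw [hv_def, hw_def]
      abel
    · simp
  constructor
  · have h0 := key 0
    rw [zero_smul, NormedSpace.exp_zero, ContinuousLinearMap.one_apply] at h0
    have := congrArg Prod.fst h0
    simpa using this.symm
  · intro t
    have hder : HasDerivAt (fun s : ℝ => NormedSpace.exp (s • M))
        (M * NormedSpace.exp (t • M)) t := hasDerivAt_exp_smul_const' (𝕂 := ℝ) M t
    have hc : HasDerivAt (fun s : ℝ => NormedSpace.exp (s • M) (a, (1 : ℝ)))
        ((M * NormedSpace.exp (t • M)) (a, (1 : ℝ))) t := by
      have := hder.clm_apply (hasDerivAt_const t ((a, (1 : ℝ)) : A × ℝ))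
      simpa using this
    have hval : (M * NormedSpace.exp (t • M)) (a, (1 : ℝ)) = (b - L (x t), 0) := by
      rw [ContinuousLinearMap.mul_apply, key t, hM, flowOp_apply]
      simp
    have hx1 : HasDerivAt (fun s : ℝ => (NormedSpace.exp (s • M) (a, (1 : ℝ))).1)
        (b - L (x t)) t := by
      have := (ContinuousLinearMap.fst ℝ A ℝ).hasFDerivAt.comp_hasDerivAt t hc
      simpa [hval, Function.comp_def] using this
    have hxe : (fun s : ℝ => (NormedSpace.exp (s • M) (a, (1 : ℝ))).1) = x :=
      funext fun s => by rw [key s]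
    rw [hxe] at hx1
    have hgoal : D e - br e (x t) = b - L (x t) := rfl
    rw [hgoal]
    exact hx1
end

section
/- One-parameter group property of flows: let A be a differential graded Lie algebra over a field k of characteristic zero and let e ∈ A_0 have nilpotent adjoint action ad_e. Then for every a ∈ A_{−1} and all s, t ∈ k, u_{se}(u_{te}(a)) = u_{(s+t)e}(a); in particular u_{−e}(u_e(a)) = a and u_0(a) = a. -/
/-- A differential graded Lie algebra (DGLA) over a field `k` of characteristic zero:
a `ℤ`-graded `k`-vector space `A = ⊕ₙ Aₙ` with a bilinear bracket respecting the grading,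
graded antisymmetry, the graded Jacobi identity, and a differential `∂` of degree `-1`
with `∂ ∘ ∂ = 0` satisfying the graded Leibniz rule. -/
class DGLA (k : Type*) (A : Type*) [Field k] [CharZero k]
    [AddCommGroup A] [Module k A] where
  bracket : A →ₗ[k] A →ₗ[k] A
  grading : ℤ → Submodule k A
  isInternal : DirectSum.IsInternal grading
  bracket_mem : ∀ (m n : ℤ) (a b : A), a ∈ grading m → b ∈ grading n →
    bracket a b ∈ grading (m + n)
  bracket_antisymm : ∀ (m n : ℤ) (a b : A), a ∈ grading m → b ∈ grading n →
    bracket b a = -(((-1 : k) ^ (m * n)) • bracket a b)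
  jacobi : ∀ (l m n : ℤ) (a b c : A), a ∈ grading l → b ∈ grading m → c ∈ grading n →
    ((-1 : k) ^ (l * m)) • bracket (bracket b c) a
      + ((-1 : k) ^ (m * n)) • bracket (bracket c a) b
      + ((-1 : k) ^ (n * l)) • bracket (bracket a b) c = 0
  d : A →ₗ[k] A
  d_mem : ∀ (n : ℤ) (a : A), a ∈ grading n → d a ∈ grading (n - 1)
  d_sq : ∀ a : A, d (d a) = 0
  leibniz : ∀ (m : ℤ) (a b : A), a ∈ grading m →
    d (bracket a b) = bracket (d a) b + ((-1 : k) ^ m) • bracket a (d b)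

namespace DGLA

variable (k : Type*) {A : Type*} [Field k] [CharZero k] [AddCommGroup A] [Module k A]
  [DGLA k A]

/-- The differential `∂` of the DGLA. -/
noncomputable def D : A →ₗ[k] A := DGLA.d (k := k) (A := A)

/-- The bracket `[x, y]` of the DGLA. -/
noncomputable def br (x y : A) : A := DGLA.bracket (k := k) (A := A) x y

/-- The `n`-th graded piece `Aₙ`. -/
noncomputable def gr (n : ℤ) : Submodule k A := DGLA.grading (k := k) (A := A) n

/-- The adjoint operator `ad_x = [x, ·]`. -/
noncomputable def ad (x : A) : Module.End k A := DGLA.bracket (k := k) (A := A) x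

/-- A *point*: an element of `A₋₁` satisfying the Maurer–Cartan equation
`∂a + (1/2)[a,a] = 0`. -/
def IsPoint (a : A) : Prop :=
  a ∈ gr k (-1) ∧ D k a + (2⁻¹ : k) • br k a a = 0

/-- The twisted differential `∂_a = ∂ + ad_a`. -/
noncomputable def twistD (a : A) : Module.End k A := D k + ad k a

/-- The curvature `κ(a) = ∂a + (1/2)[a,a]`. -/
noncomputable def curv (a : A) : A := D k a + (2⁻¹ : k) • br k a a

/-- The truncated operator power series `Σ_{n<N} (−1)ⁿ fⁿ/n!`; when `f^N = 0` this is the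
exponential `exp(−f)` (a finite sum by nilpotency). -/
noncomputable def expNeg (f : Module.End k A) (N : ℕ) : Module.End k A :=
  ∑ n ∈ Finset.range N, ((-1 : k) ^ n * (Nat.factorial n : k)⁻¹) • f ^ n

/-- The truncated operator power series `F(f) = Σ_{n<N} (−1)ⁿ fⁿ/(n+1)!`; when `f^N = 0`
this is the power series of `(1 − e^{−T})/T` evaluated at `f` (a finite sum by nilpotency). -/
noncomputable def Fser (f : Module.End k A) (N : ℕ) : Module.End k A :=
  ∑ n ∈ Finset.range N, ((-1 : k) ^ n * (Nat.factorial (n + 1) : k)⁻¹) • f ^ n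

/-- The time-one flow `u_e(a) := exp(−ad_e)(a) + F(ad_e)(∂e)` of `e ∈ A₀` applied to
`a ∈ A₋₁`, truncated at order `N` (exact when `(ad_e)^N = 0`). -/
noncomputable def flow (e : A) (N : ℕ) (a : A) : A :=
  expNeg k (ad k e) N a + Fser k (ad k e) N (D k e)

end DGLA

section FlowAux

open Polynomial Finset

variable {k : Type*} [Field k] [CharZero k]

private lemma key_sum (s t : k) (n : ℕ) :
    ∑ p ∈ Finset.HasAntidiagonal.antidiagonal n,
        s ^ p.1 * t ^ p.2 * ((p.1.factorial : k)⁻¹ * (p.2.factorial : k)⁻¹)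
      = (s + t) ^ n * ((n.factorial : k))⁻¹ := by
  rw [Finset.Nat.sum_antidiagonal_eq_sum_range_succ_mk, add_pow, Finset.sum_mul]
  refine Finset.sum_congr rfl fun i hi => ?_
  rw [Finset.mem_range, Nat.lt_succ_iff] at hi
  have hfac : ((n.choose i : k)) * (i.factorial : k) * ((n - i).factorial : k)
      = (n.factorial : k) := by
    exact_mod_cast congrArg (Nat.cast (R := k)) (Nat.choose_mul_factorial_mul_factorial hi)
  have h1 : (i.factorial : k) ≠ 0 := Nat.cast_ne_zero.mpr i.factorial_ne_zero
  have h2 : (((n - i).factorial : ℕ) : k) ≠ 0 := Nat.cast_ne_zero.mpr (n - i).factorial_ne_zero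
  have h3 : ((n.factorial : ℕ) : k) ≠ 0 := Nat.cast_ne_zero.mpr n.factorial_ne_zero
  field_simp
  linear_combination (-(s ^ i * t ^ (n - i))) * hfac

/-- Truncated power series of `exp(-cT)`. -/
private noncomputable def ePoly (N : ℕ) (c : k) : Polynomial k :=
  ∑ n ∈ Finset.range N, Polynomial.C ((-1 : k) ^ n * c ^ n * (n.factorial : k)⁻¹)
    * Polynomial.X ^ n

/-- Truncated power series of `(1 - exp(-cT))/(cT)`. -/
private noncomputable def fPoly (N : ℕ) (c : k) : Polynomial k :=
  ∑ n ∈ Finset.range N, Polynomial.C ((-1 : k) ^ n * c ^ n * ((n + 1).factorial : k)⁻¹)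
    * Polynomial.X ^ n

private lemma coeff_ePoly (N : ℕ) (c : k) (m : ℕ) :
    (ePoly N c).coeff m
      = if m < N then (-1 : k) ^ m * c ^ m * (m.factorial : k)⁻¹ else 0 := by
  simp only [ePoly, Polynomial.finset_sum_coeff, Polynomial.coeff_C_mul,
    Polynomial.coeff_X_pow, mul_ite, mul_one, mul_zero]
  rw [Finset.sum_ite_eq (Finset.range N) m]
  simp [Finset.mem_range]

private lemma coeff_fPoly (N : ℕ) (c : k) (m : ℕ) :
    (fPoly N c).coeff m
      = if m < N then (-1 : k) ^ m * c ^ m * ((m + 1).factorial : k)⁻¹ else 0 := by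
  simp only [fPoly, Polynomial.finset_sum_coeff, Polynomial.coeff_C_mul,
    Polynomial.coeff_X_pow, mul_ite, mul_one, mul_zero]
  rw [Finset.sum_ite_eq (Finset.range N) m]
  simp [Finset.mem_range]

private lemma e_dvd (N : ℕ) (s t : k) :
    (Polynomial.X : Polynomial k) ^ N ∣ ePoly N s * ePoly N t - ePoly N (s + t) := by
  rw [Polynomial.X_pow_dvd_iff]
  intro d hd
  rw [Polynomial.coeff_sub, Polynomial.coeff_mul, coeff_ePoly, if_pos hd, sub_eq_zero]
  have hco : ∀ p ∈ Finset.HasAntidiagonal.antidiagonal d,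
      (ePoly N s).coeff p.1 * (ePoly N t).coeff p.2
        = (-1 : k) ^ d
          * (s ^ p.1 * t ^ p.2 * ((p.1.factorial : k)⁻¹ * (p.2.factorial : k)⁻¹)) := by
    intro p hp
    rw [Finset.HasAntidiagonal.mem_antidiagonal] at hp
    have h1 : p.1 < N := lt_of_le_of_lt (hp ▸ Nat.le_add_right p.1 p.2) hd
    have h2 : p.2 < N := lt_of_le_of_lt (hp ▸ Nat.le_add_left p.2 p.1) hd
    rw [coeff_ePoly, coeff_ePoly, if_pos h1, if_pos h2, ← hp, pow_add]
    ring
  rw [Finset.sum_congr rfl hco, ← Finset.mul_sum, key_sum]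
  ring

private lemma f_dvd (N : ℕ) (s t : k) :
    (Polynomial.X : Polynomial k) ^ N ∣
      Polynomial.C t * (ePoly N s * fPoly N t) + Polynomial.C s * fPoly N s
        - Polynomial.C (s + t) * fPoly N (s + t) := by
  rw [Polynomial.X_pow_dvd_iff]
  intro d hd
  rw [Polynomial.coeff_sub, Polynomial.coeff_add, Polynomial.coeff_C_mul,
    Polynomial.coeff_C_mul, Polynomial.coeff_C_mul, Polynomial.coeff_mul,
    coeff_fPoly, coeff_fPoly, if_pos hd, if_pos hd, sub_eq_zero]
  have hco : ∀ p ∈ Finset.HasAntidiagonal.antidiagonal d,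
      (ePoly N s).coeff p.1 * (fPoly N t).coeff p.2
        = (-1 : k) ^ d
          * (s ^ p.1 * t ^ p.2 * ((p.1.factorial : k)⁻¹ * ((p.2 + 1).factorial : k)⁻¹)) := by
    intro p hp
    rw [Finset.HasAntidiagonal.mem_antidiagonal] at hp
    have h1 : p.1 < N := lt_of_le_of_lt (hp ▸ Nat.le_add_right p.1 p.2) hd
    have h2 : p.2 < N := lt_of_le_of_lt (hp ▸ Nat.le_add_left p.2 p.1) hd
    rw [coeff_ePoly, coeff_fPoly, if_pos h1, if_pos h2, ← hp, pow_add]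
    ring
  rw [Finset.sum_congr rfl hco, ← Finset.mul_sum]
  have hk := key_sum s t (d + 1)
  rw [Finset.Nat.sum_antidiagonal_succ'] at hk
  have hTS : ∑ p ∈ Finset.HasAntidiagonal.antidiagonal d,
      s ^ p.1 * t ^ (p.2 + 1) * ((p.1.factorial : k)⁻¹ * ((p.2 + 1).factorial : k)⁻¹)
        = t * ∑ p ∈ Finset.HasAntidiagonal.antidiagonal d,
            s ^ p.1 * t ^ p.2 * ((p.1.factorial : k)⁻¹ * ((p.2 + 1).factorial : k)⁻¹) := by
    rw [Finset.mul_sum]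
    exact Finset.sum_congr rfl fun p _ => by ring
  rw [hTS] at hk
  simp only [pow_zero, Nat.factorial_zero, Nat.cast_one, inv_one, mul_one] at hk
  linear_combination ((-1 : k) ^ d) * hk

variable {A : Type*} [AddCommGroup A] [Module k A]

private lemma aeval_ePoly (f : Module.End k A) (N : ℕ) (c : k) :
    Polynomial.aeval f (ePoly N c) = DGLA.expNeg k (c • f) N := by
  unfold ePoly DGLA.expNeg
  rw [map_sum]
  refine Finset.sum_congr rfl fun n _ => ?_
  rw [map_mul, Polynomial.aeval_C, map_pow, Polynomial.aeval_X, _root_.smul_pow, smul_smul,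
    ← Algebra.smul_def]
  congr 1
  ring

private lemma aeval_fPoly (f : Module.End k A) (N : ℕ) (c : k) :
    Polynomial.aeval f (fPoly N c) = DGLA.Fser k (c • f) N := by
  unfold fPoly DGLA.Fser
  rw [map_sum]
  refine Finset.sum_congr rfl fun n _ => ?_
  rw [map_mul, Polynomial.aeval_C, map_pow, Polynomial.aeval_X, _root_.smul_pow, smul_smul,
    ← Algebra.smul_def]
  congr 1
  ring

private lemma expNeg_mul {N : ℕ} (f : Module.End k A) (hN : f ^ N = 0) (s t : k) :
    DGLA.expNeg k (s • f) N * DGLA.expNeg k (t • f) N = DGLA.expNeg k ((s + t) • f) N := by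
  obtain ⟨q, hq⟩ := e_dvd N s t
  have h1 : ePoly N s * ePoly N t = ePoly N (s + t) + Polynomial.X ^ N * q := by
    rw [← hq]; ring
  have h2 := congrArg (Polynomial.aeval f) h1
  simp only [map_add, map_mul, map_pow, Polynomial.aeval_X, hN, zero_mul, add_zero,
    aeval_ePoly] at h2
  exact h2

private lemma Fser_comb {N : ℕ} (f : Module.End k A) (hN : f ^ N = 0) (s t : k) :
    t • (DGLA.expNeg k (s • f) N * DGLA.Fser k (t • f) N) + s • DGLA.Fser k (s • f) N
      = (s + t) • DGLA.Fser k ((s + t) • f) N := by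
  obtain ⟨q, hq⟩ := f_dvd N s t
  have h1 : Polynomial.C t * (ePoly N s * fPoly N t) + Polynomial.C s * fPoly N s
      = Polynomial.C (s + t) * fPoly N (s + t) + Polynomial.X ^ N * q := by
    rw [← hq]; ring
  have h2 := congrArg (Polynomial.aeval f) h1
  simp only [map_add, map_mul, map_pow, Polynomial.aeval_X, Polynomial.aeval_C, hN,
    zero_mul, add_zero, aeval_ePoly, aeval_fPoly, ← Algebra.smul_def] at h2
  rw [← map_add, ← Algebra.smul_def] at h2
  exact h2

private lemma expNeg_zero' {N : ℕ} (hNpos : 0 < N) :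
    DGLA.expNeg k (0 : Module.End k A) N = 1 := by
  unfold DGLA.expNeg
  rw [Finset.sum_eq_single 0]
  · simp
  · intro n _ hne
    rw [zero_pow hne, smul_zero]
  · intro h
    exact absurd (Finset.mem_range.mpr hNpos) h

end FlowAux

open DGLA in
/-- one-parameter group property of flows. In a DGLA over a field `k` of
characteristic zero, if `e ∈ A₀` has nilpotent adjoint action (`(ad_e)^N = 0`), then for
every `a ∈ A₋₁` and all `s, t ∈ k`, `u_{se}(u_{te}(a)) = u_{(s+t)e}(a)`; in particular
`u_{−e}(u_e(a)) = a` and `u_0(a) = a`. -/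
theorem flow_add {k A : Type*} [Field k] [CharZero k]
    [AddCommGroup A] [Module k A] [DGLA k A]
    (e : A) (he : e ∈ gr k 0) (N : ℕ) (hN : ad k e ^ N = 0) :
    ∀ a ∈ gr k (-1), ∀ s t : k,
      (flow k (s • e) N (flow k (t • e) N a) = flow k ((s + t) • e) N a) ∧
      flow k (-e) N (flow k e N a) = a ∧ flow k ((0 : k) • e) N a = a := by
  intro a ha s t
  rcases Nat.eq_zero_or_pos N with rfl | hNpos
  · have h1 : (1 : Module.End k A) = 0 := by simpa using hN
    have hsub : Subsingleton A := by
      refine ⟨fun x y => ?_⟩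
      have hx := congrArg (fun g : Module.End k A => g x) h1
      have hy := congrArg (fun g : Module.End k A => g y) h1
      simp only [Module.End.one_apply, LinearMap.zero_apply] at hx hy
      rw [hx, hy]
    exact ⟨Subsingleton.elim _ _, Subsingleton.elim _ _, Subsingleton.elim _ _⟩
  · have had : ∀ c : k, ad k (c • e) = c • ad k e := fun c => by
      unfold DGLA.ad
      exact map_smul _ _ _
    have hD : ∀ c : k, D k (c • e) = c • D k e := fun c => map_smul _ _ _
    have main : ∀ s t : k,
        flow k (s • e) N (flow k (t • e) N a) = flow k ((s + t) • e) N a := by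
      intro s t
      unfold DGLA.flow
      rw [had, had, had, hD, hD, hD, map_smul, map_smul, map_smul, map_add, map_smul]
      have h1 := congrArg (fun g : Module.End k A => g a) (expNeg_mul (ad k e) hN s t)
      have h2 := congrArg (fun g : Module.End k A => g (D k e)) (Fser_comb (ad k e) hN s t)
      simp only [Module.End.mul_apply, LinearMap.add_apply, LinearMap.smul_apply] at h1 h2
      rw [add_assoc, h1, h2]
    have h0 : flow k ((0 : k) • e) N a = a := by
      rw [zero_smul]
      unfold DGLA.flow
      have had0 : ad k (0 : A) = 0 := by
        unfold DGLA.ad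
        exact map_zero _
      have hD0 : D k (0 : A) = (0 : A) := map_zero _
      rw [had0, hD0, map_zero, add_zero, expNeg_zero' hNpos, Module.End.one_apply]
    refine ⟨main s t, ?_, h0⟩
    have hmt := main (-1) 1
    rw [neg_one_smul, one_smul] at hmt
    have hz : (-1 : k) + 1 = 0 := by ring
    rw [hz] at hmt
    exact hmt.trans h0
end
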